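/- Let f : ℂ → ℂ be differentiable at 0 (over ℝ) with f(0) = 0, and suppose f carries each circle centered at 0 into a circle centered at 0, in the sense that for all z, w ∈ ℂ, ‖z‖ = ‖w‖ implies ‖f(z)‖ = ‖f(w)‖. Then there exists c ≥ 0 such that the derivative L = fderiv ℝ f 0 satisfies ‖L(v)‖ = c·‖v‖ for all v ∈ ℂ. -/

import Mathlib

lemma tendsto_norm_slope_aux (f : ℂ → ℂ) (hf : DifferentiableAt ℝ f 0) (h0 : f 0 = 0)
    (u : ℂ) :
    Filter.Tendsto (fun t : ℝ => ‖f (t • u)‖ / |t|) (nhdsWithin 0 {(0:ℝ)}ᶜ)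
      (nhds ‖fderiv ℝ f 0 u‖) := by
  have hd : HasDerivAt (fun t : ℝ => f (t • u)) (fderiv ℝ f 0 u) 0 := by
    have h1 : HasDerivAt (fun t : ℝ => t • u) u 0 := by
      simpa using (hasDerivAt_id (0:ℝ)).smul_const u
    have h2 : HasFDerivAt f (fderiv ℝ f 0) ((0:ℝ) • u) := by simpa using hf.hasFDerivAt
    exact h2.comp_hasDerivAt 0 h1
  have hs := hasDerivAt_iff_tendsto_slope.mp hd
  have hn := hs.norm
  refine hn.congr' ?_
  filter_upwards [self_mem_nhdsWithin] with t ht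
  have ht' : (t:ℝ) ≠ 0 := ht
  simp [slope_def_field, slope, h0, norm_smul, abs_inv, div_eq_inv_mul]

/-- If `f : ℂ → ℂ` is real-differentiable at `0`, fixes `0`, and carries each circle
centered at `0` into a circle centered at `0`, then its derivative at `0` multiplies all
norms by a fixed constant `c ≥ 0`. -/
theorem fderiv_of_circle_preserving (f : ℂ → ℂ) (hf : DifferentiableAt ℝ f 0) (h0 : f 0 = 0)
    (hcirc : ∀ z w : ℂ, ‖z‖ = ‖w‖ → ‖f z‖ = ‖f w‖) :
    ∃ c : ℝ, 0 ≤ c ∧ ∀ v : ℂ, ‖fderiv ℝ f 0 v‖ = c * ‖v‖ := by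
  set L := fderiv ℝ f 0
  refine ⟨‖L 1‖, norm_nonneg _, ?_⟩
  have key : ∀ u : ℂ, ‖u‖ = 1 → ‖L u‖ = ‖L 1‖ := by
    intro u hu
    have h1 := tendsto_norm_slope_aux f hf h0 u
    have h2 := tendsto_norm_slope_aux f hf h0 1
    refine tendsto_nhds_unique h1 (h2.congr ?_)
    intro t
    have : ‖(t:ℝ) • (1:ℂ)‖ = ‖(t:ℝ) • u‖ := by
      simp [norm_smul, hu]
    rw [hcirc _ _ this]
  intro v
  rcases eq_or_ne v 0 with rfl | hv
  · simp
  · have hnv : ‖v‖ ≠ 0 := norm_ne_zero_iff.mpr hv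
    have hu : ‖(‖v‖⁻¹ • v)‖ = 1 := by
      rw [norm_smul, norm_inv, norm_norm, inv_mul_cancel₀ hnv]
    have := key _ hu
    rw [map_smul, norm_smul, norm_inv, norm_norm, inv_mul_eq_div, div_eq_iff hnv] at this
    rw [this]
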